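/- Let A be an m×m real symmetric positive semidefinite matrix with Moore–Penrose inverse A†, let α be a real scalar, and define the Newton–Raphson iterates A₀ = α A, A_{k+1} = 2 A_k − A_k A A_k. Then for every k ≥ 0 the spectral norm satisfies ‖A A† − A A_k‖ ≤ ‖A A† − A A₀‖^(2^k). In particular, if ‖A A† − α A²‖ < 1, then ‖A A† − A A_k‖ → 0 as k → ∞. -/

import Mathlib

open Matrix Filter

/-- The spectral norm (ℓ²-operator norm) of a real square matrix. -/
noncomputable def specNorm {m : ℕ} (M : Matrix (Fin m) (Fin m) ℝ) : ℝ :=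
  ‖Matrix.toEuclideanCLM (𝕜 := ℝ) M‖

/-- `Ad` is the Moore–Penrose inverse of `A`: the Penrose equations
`A Ad A = A`, `Ad A Ad = Ad`, `(A Ad)ᵀ = A Ad`, `(Ad A)ᵀ = Ad A`. -/
def IsMoorePenroseInv {m n : ℕ} (A : Matrix (Fin m) (Fin n) ℝ)
    (Ad : Matrix (Fin n) (Fin m) ℝ) : Prop :=
  A * Ad * A = A ∧ Ad * A * Ad = Ad ∧ (A * Ad)ᵀ = A * Ad ∧ (Ad * A)ᵀ = Ad * A

lemma specNorm_nonneg {m : ℕ} (M : Matrix (Fin m) (Fin m) ℝ) : 0 ≤ specNorm M :=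
  norm_nonneg _

lemma specNorm_mul_le {m : ℕ} (M N : Matrix (Fin m) (Fin m) ℝ) :
    specNorm (M * N) ≤ specNorm M * specNorm N := by
  unfold specNorm
  rw [_root_.map_mul]
  exact norm_mul_le _ _

/-- In spectral norm, `‖A Ad - A N_k‖ ≤ ‖A Ad - A N_0‖ ^ (2 ^ k)` for all
`k`, and if `‖A Ad - α A²‖ < 1` then `‖A Ad - A N_k‖ → 0`. -/
theorem newton_raphson_contraction_pow {m : ℕ}
    (A Ad : Matrix (Fin m) (Fin m) ℝ)
    (hA : A.PosSemidef)
    (hMP : IsMoorePenroseInv A Ad)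
    (α : ℝ) (N : ℕ → Matrix (Fin m) (Fin m) ℝ)
    (hN0 : N 0 = α • A)
    (hNrec : ∀ k, N (k + 1) = (2 : ℝ) • N k - N k * A * N k) :
    (∀ k, specNorm (A * Ad - A * N k) ≤ specNorm (A * Ad - A * N 0) ^ (2 ^ k)) ∧
      (specNorm (A * Ad - α • (A * A)) < 1 →
        Tendsto (fun k => specNorm (A * Ad - A * N k)) atTop (nhds 0)) := by
  obtain ⟨h1, h2, h3, h4⟩ := hMP
  have hAsym : Aᵀ = A := by
    have := hA.1
    simpa [Matrix.IsHermitian, Matrix.conjTranspose_eq_transpose_of_trivial] using this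
  -- A * (A * Ad) = A
  have hAAAd : A * (A * Ad) = A := by
    have : (A * Ad * A)ᵀ = A := by rw [h1, hAsym]
    rw [Matrix.transpose_mul, h3, hAsym] at this
    exact this
  -- (A*Ad) is idempotent
  have hIdem : (A * Ad) * (A * Ad) = A * Ad := by
    rw [← mul_assoc, h1]
  -- N k * (A * Ad) = N k
  have hNAd : ∀ k, N k * (A * Ad) = N k := by
    intro k
    induction k with
    | zero =>
      rw [hN0, smul_mul_assoc, hAAAd]
    | succ k ih =>
      rw [hNrec, sub_mul, smul_mul_assoc, ih, mul_assoc (N k * A), ih]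
  -- the key quadratic recursion for the error
  have key : ∀ k, A * Ad - A * N (k + 1) = (A * Ad - A * N k) * (A * Ad - A * N k) := by
    intro k
    have hE2 : (A * Ad - A * N k) * (A * Ad - A * N k)
        = A * Ad - A * N k - (A * N k - A * N k * (A * N k)) := by
      rw [sub_mul, mul_sub, mul_sub, hIdem]
      have hAAdANk : A * Ad * (A * N k) = A * N k := by
        rw [← mul_assoc, h1]
      have hANkAAd : A * N k * (A * Ad) = A * N k := by
        rw [mul_assoc, hNAd]
      rw [hAAdANk, hANkAAd]
    rw [hE2, hNrec]
    have : A * ((2:ℝ) • N k - N k * A * N k)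
        = (2:ℝ) • (A * N k) - A * N k * (A * N k) := by
      rw [mul_sub, Matrix.mul_smul]
      simp only [mul_assoc]
    rw [this, two_smul]
    abel
  -- the norm bound
  set r := specNorm (A * Ad - A * N 0) with hr
  have hr0 : 0 ≤ r := specNorm_nonneg _
  have bound : ∀ k, specNorm (A * Ad - A * N k) ≤ r ^ (2 ^ k) := by
    intro k
    induction k with
    | zero => simp [hr]
    | succ k ih =>
      calc specNorm (A * Ad - A * N (k + 1))
          = specNorm ((A * Ad - A * N k) * (A * Ad - A * N k)) := by rw [key k]
        _ ≤ specNorm (A * Ad - A * N k) * specNorm (A * Ad - A * N k) :=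
            specNorm_mul_le _ _
        _ ≤ r ^ (2 ^ k) * r ^ (2 ^ k) :=
            mul_le_mul ih ih (specNorm_nonneg _) (pow_nonneg hr0 _)
        _ = r ^ (2 ^ (k + 1)) := by rw [← pow_add]; ring_nf
  refine ⟨bound, ?_⟩
  intro hlt
  have hE0 : A * Ad - A * N 0 = A * Ad - α • (A * A) := by
    rw [hN0, Matrix.mul_smul]
  have hrlt : r < 1 := by rw [hr, hE0]; exact hlt
  have hle1 : r ≤ 1 := hrlt.le
  apply squeeze_zero (fun k => specNorm_nonneg _) (fun k => ?_)
    (tendsto_pow_atTop_nhds_zero_of_lt_one hr0 hrlt)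
  · calc specNorm (A * Ad - A * N k) ≤ r ^ (2 ^ k) := bound k
      _ ≤ r ^ k := pow_le_pow_of_le_one hr0 hle1 (Nat.lt_two_pow_self (n := k)).le
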